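/- arXiv:2206.07386 — 2 statements merged into one kernel-verified Lean document; each statement's English description precedes it below -/
import Mathlib

section
/- Define the augmented score $\psi(Z, \theta, \gamma, \alpha) = m(W,\gamma) + \alpha(W)(Y - \gamma(W)) - \theta$ where $Z = (Y, W)$. If $\gamma_0(W) = E_P[Y \mid W]$, $\alpha_0$ is the Riesz representer of the linear mean-square continuous functional $\gamma \mapsto E_P[m(W,\gamma)]$ on $\Gamma$, and $\theta_0 = E_P[m(W,\gamma_0)]$, then the Gateaux derivative of $r \mapsto E_P[\psi(Z, \theta_0, \gamma_0 + r(\gamma - \gamma_0), \alpha_0)]$ at $r = 0$ equals $0$ for every $\gamma \in \Gamma$. -/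
open MeasureTheory


private lemma l2_mul_integrable {𝓦 : Type*} [MeasurableSpace 𝓦] {P : Measure (ℝ × 𝓦)}
    {f g : ℝ × 𝓦 → ℝ} (hf : MemLp f 2 P) (hg : MemLp g 2 P) :
    Integrable (fun z => f z * g z) P := by
  have : MemLp (f • g) 1 P := hg.smul hf
  exact memLp_one_iff_integrable.mp this

/-- **Neyman orthogonality with respect to the regression function `γ`.**
With `Z = (Y, W) ∼ P`, the augmented score
`ψ(Z,θ,γ,α) = m(W,γ) + α(W)(Y - γ(W)) - θ` has zero Gateaux derivative in the
direction `γ - γ₀` at `(θ₀, γ₀, α₀)`, where `γ₀(W) = E_P[Y ∣ W]`, `α₀` is the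
Riesz representer of `γ ↦ E_P[m(W,γ)]` on `Γ`, and `θ₀ = E_P[m(W,γ₀)]`. -/
theorem neyman_orthogonality_gamma
    {𝓦 : Type*} [MeasurableSpace 𝓦] (P : Measure (ℝ × 𝓦)) [IsProbabilityMeasure P]
    (Γ : Submodule ℝ (𝓦 → ℝ)) (m : 𝓦 → (𝓦 → ℝ) → ℝ) (γ₀ α₀ : 𝓦 → ℝ) (θ₀ : ℝ)
    (hγ₀Γ : γ₀ ∈ Γ)
    (hY : MemLp (fun z : ℝ × 𝓦 => z.1) 2 P)
    (hΓL2 : ∀ γ ∈ Γ, MemLp (fun z : ℝ × 𝓦 => γ z.2) 2 P)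
    (hα₀ : MemLp (fun z : ℝ × 𝓦 => α₀ z.2) 2 P)
    (hmInt : ∀ γ ∈ Γ, Integrable (fun z : ℝ × 𝓦 => m z.2 γ) P)
    (hadd : ∀ γ₁ ∈ Γ, ∀ γ₂ ∈ Γ, ∀ w, m w (γ₁ + γ₂) = m w γ₁ + m w γ₂)
    (hsmul : ∀ c : ℝ, ∀ γ ∈ Γ, ∀ w, m w (c • γ) = c * m w γ)
    -- γ₀(W) is (a version of) the conditional expectation E_P[Y ∣ W]
    (hcond : P[(fun z : ℝ × 𝓦 => z.1) | MeasurableSpace.comap Prod.snd inferInstance]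
        =ᵐ[P] fun z : ℝ × 𝓦 => γ₀ z.2)
    -- Riesz representer property of α₀ on Γ
    (hriesz : ∀ γ ∈ Γ, ∫ z, m z.2 γ ∂P = ∫ z, α₀ z.2 * γ z.2 ∂P)
    (hθ₀ : θ₀ = ∫ z, m z.2 γ₀ ∂P) :
    ∀ γ ∈ Γ,
      HasDerivAt
        (fun r : ℝ =>
          ∫ z, (m z.2 (γ₀ + r • (γ - γ₀)) +
              α₀ z.2 * (z.1 - (γ₀ + r • (γ - γ₀)) z.2) - θ₀) ∂P)
        0 0 := by
  intro γ hγ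
  set δ : 𝓦 → ℝ := γ - γ₀ with hδdef
  have hδΓ : δ ∈ Γ := Γ.sub_mem hγ hγ₀Γ
  have hδL2 := hΓL2 δ hδΓ
  have hγ₀L2 := hΓL2 γ₀ hγ₀Γ
  have I1 : Integrable (fun z : ℝ × 𝓦 => m z.2 γ₀) P := hmInt γ₀ hγ₀Γ
  have I2 : Integrable (fun z : ℝ × 𝓦 => α₀ z.2 * (z.1 - γ₀ z.2)) P :=
    l2_mul_integrable hα₀ (hY.sub hγ₀L2)
  have I3 : Integrable (fun z : ℝ × 𝓦 => m z.2 δ) P := hmInt δ hδΓ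
  have I4 : Integrable (fun z : ℝ × 𝓦 => α₀ z.2 * δ z.2) P := l2_mul_integrable hα₀ hδL2
  have key : ∀ r : ℝ,
      ∫ z, (m z.2 (γ₀ + r • (γ - γ₀)) +
          α₀ z.2 * (z.1 - (γ₀ + r • (γ - γ₀)) z.2) - θ₀) ∂P
        = ∫ z, (m z.2 γ₀ + α₀ z.2 * (z.1 - γ₀ z.2) - θ₀) ∂P := by
    intro r
    have hpt : ∀ z : ℝ × 𝓦,
        m z.2 (γ₀ + r • (γ - γ₀)) + α₀ z.2 * (z.1 - (γ₀ + r • (γ - γ₀)) z.2) - θ₀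
          = (m z.2 γ₀ + α₀ z.2 * (z.1 - γ₀ z.2) - θ₀)
            + r * (m z.2 δ - α₀ z.2 * δ z.2) := by
      intro z
      have h1 : m z.2 (γ₀ + r • (γ - γ₀)) = m z.2 γ₀ + r * m z.2 δ := by
        rw [hadd γ₀ hγ₀Γ (r • δ) (Γ.smul_mem r hδΓ), hsmul r δ hδΓ]
      have h2 : (γ₀ + r • (γ - γ₀)) z.2 = γ₀ z.2 + r * δ z.2 := rfl
      rw [h1, h2]; ring
    calc ∫ z, (m z.2 (γ₀ + r • (γ - γ₀)) +
          α₀ z.2 * (z.1 - (γ₀ + r • (γ - γ₀)) z.2) - θ₀) ∂P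
        = ∫ z, ((m z.2 γ₀ + α₀ z.2 * (z.1 - γ₀ z.2) - θ₀)
            + r * (m z.2 δ - α₀ z.2 * δ z.2)) ∂P := by
          exact integral_congr_ae (Filter.Eventually.of_forall hpt)
      _ = (∫ z, (m z.2 γ₀ + α₀ z.2 * (z.1 - γ₀ z.2) - θ₀) ∂P)
            + ∫ z, r * (m z.2 δ - α₀ z.2 * δ z.2) ∂P := by
          exact integral_add ((I1.add I2).sub (integrable_const θ₀))
            (((I3.sub I4)).const_mul r)
      _ = ∫ z, (m z.2 γ₀ + α₀ z.2 * (z.1 - γ₀ z.2) - θ₀) ∂P := by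
          have : ∫ z, r * (m z.2 δ - α₀ z.2 * δ z.2) ∂P
              = r * ((∫ z, m z.2 δ ∂P) - ∫ z, α₀ z.2 * δ z.2 ∂P) := by
            rw [integral_const_mul, integral_sub I3 I4]
          rw [this, hriesz δ hδΓ, sub_self, mul_zero, add_zero]
  have : (fun r : ℝ =>
      ∫ z, (m z.2 (γ₀ + r • (γ - γ₀)) +
          α₀ z.2 * (z.1 - (γ₀ + r • (γ - γ₀)) z.2) - θ₀) ∂P)
      = fun _ : ℝ => ∫ z, (m z.2 γ₀ + α₀ z.2 * (z.1 - γ₀ z.2) - θ₀) ∂P :=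
    funext key
  rw [this]
  exact hasDerivAt_const 0 _
end

section
/- (Double robustness identity) With $\psi(Z, \theta, \gamma, \alpha) = m(W,\gamma) + \alpha(W)(Y - \gamma(W)) - \theta$, $\gamma_0(W) = E_P[Y \mid W]$, $\alpha_0$ the Riesz representer of $\gamma \mapsto E_P[m(W,\gamma)]$ on $\Gamma$, and $\theta_0 = E_P[m(W,\gamma_0)]$, for every $\gamma, \alpha \in \Gamma$ we have $E_P[\psi(Z, \theta_0, \gamma, \alpha)] = -E_P[(\alpha(W) - \alpha_0(W))(\gamma(W) - \gamma_0(W))]$. In particular the augmented score has mean zero whenever $\gamma = \gamma_0$ (for any $\alpha$) or $\alpha = \alpha_0$ (for any $\gamma$). -/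
open MeasureTheory

/-- **Double robustness identity.**
With `ψ(Z,θ,γ,α) = m(W,γ) + α(W)(Y - γ(W)) - θ`, `γ₀(W) = E_P[Y ∣ W]`
(expressed through the orthogonality property `E_P[α(W)(Y - γ₀(W))] = 0`),
`α₀` the Riesz representer of `γ ↦ E_P[m(W,γ)]` on `Γ`, and
`θ₀ = E_P[m(W,γ₀)]`, for every `γ, α ∈ Γ`:
`E_P[ψ(Z,θ₀,γ,α)] = -E_P[(α(W) - α₀(W))(γ(W) - γ₀(W))]`.
In particular the score has mean zero if `γ = γ₀` or `α = α₀`. -/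
theorem double_robustness
    {𝓦 : Type*} [MeasurableSpace 𝓦] (P : Measure (ℝ × 𝓦)) [IsProbabilityMeasure P]
    (Γ : Submodule ℝ (𝓦 → ℝ)) (m : 𝓦 → (𝓦 → ℝ) → ℝ) (γ₀ α₀ : 𝓦 → ℝ) (θ₀ : ℝ)
    (hγ₀Γ : γ₀ ∈ Γ) (hα₀Γ : α₀ ∈ Γ)
    (hY : MemLp (fun z : ℝ × 𝓦 => z.1) 2 P)
    (hΓL2 : ∀ γ ∈ Γ, MemLp (fun z : ℝ × 𝓦 => γ z.2) 2 P)
    (hmInt : ∀ γ ∈ Γ, Integrable (fun z : ℝ × 𝓦 => m z.2 γ) P)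
    (hadd : ∀ γ₁ ∈ Γ, ∀ γ₂ ∈ Γ, ∀ w, m w (γ₁ + γ₂) = m w γ₁ + m w γ₂)
    (hsmul : ∀ c : ℝ, ∀ γ ∈ Γ, ∀ w, m w (c • γ) = c * m w γ)
    -- conditional expectation property of γ₀: E_P[α(W)(Y - γ₀(W))] = 0 for all α ∈ L²
    (hcond : ∀ α : 𝓦 → ℝ, MemLp (fun z : ℝ × 𝓦 => α z.2) 2 P →
        ∫ z, α z.2 * (z.1 - γ₀ z.2) ∂P = 0)
    -- Riesz representer property of α₀ on Γ
    (hriesz : ∀ γ ∈ Γ, ∫ z, m z.2 γ ∂P = ∫ z, α₀ z.2 * γ z.2 ∂P)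
    (hθ₀ : θ₀ = ∫ z, m z.2 γ₀ ∂P) :
    ∀ γ ∈ Γ, ∀ α ∈ Γ,
      ∫ z, (m z.2 γ + α z.2 * (z.1 - γ z.2) - θ₀) ∂P =
        - ∫ z, (α z.2 - α₀ z.2) * (γ z.2 - γ₀ z.2) ∂P := by
  intro γ hγ α hα
  have hαm := hΓL2 α hα
  have hγm := hΓL2 γ hγ
  have hγ₀m := hΓL2 γ₀ hγ₀Γ
  have hα₀m := hΓL2 α₀ hα₀Γ
  have mulInt : ∀ f g : ℝ × 𝓦 → ℝ, MemLp f 2 P → MemLp g 2 P →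
      Integrable (fun z => f z * g z) P := by
    intro f g hf hg
    have h := hg.smul (φ := f) hf (p := 2) (q := 2) (r := 1)
    exact memLp_one_iff_integrable.mp h
  have iαY : Integrable (fun z : ℝ × 𝓦 => α z.2 * z.1) P := mulInt _ _ hαm hY
  have iαγ : Integrable (fun z : ℝ × 𝓦 => α z.2 * γ z.2) P := mulInt _ _ hαm hγm
  have iαγ₀ : Integrable (fun z : ℝ × 𝓦 => α z.2 * γ₀ z.2) P := mulInt _ _ hαm hγ₀m
  have iα₀γ : Integrable (fun z : ℝ × 𝓦 => α₀ z.2 * γ z.2) P := mulInt _ _ hα₀m hγm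
  have iα₀γ₀ : Integrable (fun z : ℝ × 𝓦 => α₀ z.2 * γ₀ z.2) P := mulInt _ _ hα₀m hγ₀m
  have imγ := hmInt γ hγ
  -- E[αY] = E[αγ₀]
  have hAC : ∫ z, α z.2 * z.1 ∂P = ∫ z, α z.2 * γ₀ z.2 ∂P := by
    have h0 := hcond α hαm
    have h1 : ∫ z, (α z.2 * z.1 - α z.2 * γ₀ z.2) ∂P = 0 := by
      simpa [mul_sub] using h0
    have h2 := integral_sub iαY iαγ₀
    rw [h2] at h1
    linarith
  -- θ₀ = E[α₀γ₀]
  have hθ : θ₀ = ∫ z, α₀ z.2 * γ₀ z.2 ∂P := by rw [hθ₀, hriesz γ₀ hγ₀Γ]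
  have hmg : ∫ z, m z.2 γ ∂P = ∫ z, α₀ z.2 * γ z.2 ∂P := hriesz γ hγ
  -- expand LHS
  have hL : ∫ z, (m z.2 γ + α z.2 * (z.1 - γ z.2) - θ₀) ∂P
      = ∫ z, m z.2 γ ∂P + (∫ z, α z.2 * z.1 ∂P - ∫ z, α z.2 * γ z.2 ∂P) - θ₀ := by
    have heq : (fun z : ℝ × 𝓦 => m z.2 γ + α z.2 * (z.1 - γ z.2) - θ₀)
        = fun z : ℝ × 𝓦 => (m z.2 γ + (α z.2 * z.1 - α z.2 * γ z.2)) - θ₀ := by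
      funext z; ring
    have i1 : Integrable (fun z : ℝ × 𝓦 => α z.2 * z.1 - α z.2 * γ z.2) P := iαY.sub iαγ
    have i2 : Integrable (fun z : ℝ × 𝓦 => m z.2 γ + (α z.2 * z.1 - α z.2 * γ z.2)) P :=
      imγ.add i1
    rw [heq, integral_sub i2 (integrable_const θ₀), integral_add imγ i1,
      integral_sub iαY iαγ, integral_const]
    simp
  -- expand RHS
  have hR : ∫ z, (α z.2 - α₀ z.2) * (γ z.2 - γ₀ z.2) ∂P
      = ∫ z, α z.2 * γ z.2 ∂P - ∫ z, α z.2 * γ₀ z.2 ∂P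
        - ∫ z, α₀ z.2 * γ z.2 ∂P + ∫ z, α₀ z.2 * γ₀ z.2 ∂P := by
    have heq : (fun z : ℝ × 𝓦 => (α z.2 - α₀ z.2) * (γ z.2 - γ₀ z.2))
        = fun z : ℝ × 𝓦 => (α z.2 * γ z.2 - α z.2 * γ₀ z.2) - (α₀ z.2 * γ z.2 - α₀ z.2 * γ₀ z.2) := by
      funext z; ring
    have i1 : Integrable (fun z : ℝ × 𝓦 => α z.2 * γ z.2 - α z.2 * γ₀ z.2) P := iαγ.sub iαγ₀
    have i2 : Integrable (fun z : ℝ × 𝓦 => α₀ z.2 * γ z.2 - α₀ z.2 * γ₀ z.2) P := iα₀γ.sub iα₀γ₀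
    rw [heq, integral_sub i1 i2, integral_sub iαγ iαγ₀, integral_sub iα₀γ iα₀γ₀]
    ring
  rw [hL, hR, hmg, hθ, hAC]
  ring
end
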